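/- arXiv:1406.7702 — 7 statements merged into one kernel-verified Lean document; each statement's English description precedes it below -/
import Mathlib

section
/- Let L be a complete residuated lattice, M a nonempty set, and let ≈ and ≼ be binary L-relations on M such that: ≈ is reflexive and separated (a ≈ b = 1 iff a = b), symmetric (a ≈ b = b ≈ a), and ⊗-transitive ((a ≈ b) ⊗ (b ≈ c) ≤ a ≈ c); and ≼ is reflexive (a ≼ a = 1), antisymmetric with respect to ≈ ((a ≼ b) ⊓ (b ≼ a) ≤ a ≈ b), and ⊗-transitive ((a ≼ b) ⊗ (b ≼ c) ≤ a ≼ c). Then the following conditions are equivalent: (i) (a₁ ≈ b₁) ⊗ (a₂ ≈ b₂) ⊗ (a₁ ≼ a₂) ≤ b₁ ≼ b₂ for all a₁,a₂,b₁,b₂ ∈ M; (ii) a ≈ b ≤ a ≼ b for all a,b ∈ M; (iii) a ≈ b = (a ≼ b) ⊓ (b ≼ a) for all a,b ∈ M; (iv) ≈ is the symmetric interior of ≼, i.e., ≈ is symmetric, a ≈ b ≤ a ≼ b for all a,b, and every symmetric binary L-relation R on M with R(a,b) ≤ a ≼ b for all a,b satisfies R(a,b) ≤ a ≈ b for all a,b.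 -/
/-- A complete (integral commutative) residuated lattice: a complete lattice
with a commutative monoid operation `otimes` whose unit is the top element,
together with a residuum `rimp` satisfying the adjointness property. -/
class CompleteResiduatedLattice (L : Type*) extends CompleteLattice L where
  otimes : L → L → L
  rimp : L → L → L
  otimes_comm : ∀ a b : L, otimes a b = otimes b a
  otimes_assoc : ∀ a b c : L, otimes (otimes a b) c = otimes a (otimes b c)
  otimes_top : ∀ a : L, otimes a ⊤ = a
  adjoint : ∀ a b c : L, otimes a b ≤ c ↔ a ≤ rimp b c

open CompleteResiduatedLattice

local infixr:70 " ⊛ " => CompleteResiduatedLattice.otimes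

lemma otimes_mono_left {L : Type*} [CompleteResiduatedLattice L] {a b : L} (c : L)
    (h : a ≤ b) : a ⊛ c ≤ b ⊛ c := by
  have hb : b ≤ rimp c (b ⊛ c) := (adjoint b c (b ⊛ c)).mp le_rfl
  exact (adjoint a c (b ⊛ c)).mpr (h.trans hb)

lemma otimes_mono {L : Type*} [CompleteResiduatedLattice L] {a b c d : L}
    (h1 : a ≤ b) (h2 : c ≤ d) : a ⊛ c ≤ b ⊛ d := by
  calc a ⊛ c ≤ b ⊛ c := otimes_mono_left c h1
    _ = c ⊛ b := otimes_comm b c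
    _ ≤ d ⊛ b := otimes_mono_left b h2
    _ = b ⊛ d := otimes_comm d b

/-- Theorem 1 (equivalent characterizations of the fuzzy equality induced by
a fuzzy order). -/
theorem stmt0 {L : Type*} [CompleteResiduatedLattice L] {M : Type*} [Nonempty M]
    (eq le : M → M → L)
    (heq_refl : ∀ a b : M, eq a b = ⊤ ↔ a = b)
    (heq_symm : ∀ a b : M, eq a b = eq b a)
    (heq_trans : ∀ a b c : M, eq a b ⊛ eq b c ≤ eq a c)
    (hle_refl : ∀ a : M, le a a = ⊤)
    (hle_antisymm : ∀ a b : M, le a b ⊓ le b a ≤ eq a b)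
    (hle_trans : ∀ a b c : M, le a b ⊛ le b c ≤ le a c) :
    List.TFAE
      [ ∀ a₁ a₂ b₁ b₂ : M, eq a₁ b₁ ⊛ eq a₂ b₂ ⊛ le a₁ a₂ ≤ le b₁ b₂,
        ∀ a b : M, eq a b ≤ le a b,
        ∀ a b : M, eq a b = le a b ⊓ le b a,
        (∀ a b : M, eq a b = eq b a) ∧ (∀ a b : M, eq a b ≤ le a b) ∧
          (∀ R : M → M → L, (∀ a b, R a b = R b a) → (∀ a b, R a b ≤ le a b) →
            ∀ a b, R a b ≤ eq a b) ] := by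
  tfae_have 1 → 2 := by
    intro h a b
    have := h a a a b
    rw [(heq_refl a a).mpr rfl, hle_refl a, otimes_top, otimes_comm, otimes_top] at this
    exact this
  tfae_have 2 → 3 := by
    intro h a b
    refine le_antisymm (le_inf (h a b) ?_) (hle_antisymm a b)
    rw [heq_symm]; exact h b a
  tfae_have 3 → 4 := by
    intro h
    refine ⟨heq_symm, fun a b => (h a b).le.trans inf_le_left, fun R hs hle a b => ?_⟩
    rw [h a b]
    exact le_inf (hle a b) ((hs a b).le.trans (hle b a))
  tfae_have 4 → 2 := fun h => h.2.1
  tfae_have 2 → 1 := by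
    intro h a₁ a₂ b₁ b₂
    have h1 : eq a₁ b₁ ≤ le b₁ a₁ := (heq_symm a₁ b₁).le.trans (h b₁ a₁)
    have h2 : eq a₂ b₂ ≤ le a₂ b₂ := h a₂ b₂
    calc eq a₁ b₁ ⊛ eq a₂ b₂ ⊛ le a₁ a₂
        ≤ le b₁ a₁ ⊛ le a₂ b₂ ⊛ le a₁ a₂ := otimes_mono h1 (otimes_mono h2 le_rfl)
      _ = le b₁ a₁ ⊛ le a₁ a₂ ⊛ le a₂ b₂ := by
          rw [← otimes_assoc, ← otimes_assoc, otimes_assoc (le b₁ a₁),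
            otimes_comm (le a₂ b₂), ← otimes_assoc]
      _ = (le b₁ a₁ ⊛ le a₁ a₂) ⊛ le a₂ b₂ := (otimes_assoc _ _ _).symm
      _ ≤ le b₁ a₂ ⊛ le a₂ b₂ := otimes_mono (hle_trans b₁ a₁ a₂) le_rfl
      _ ≤ le b₁ b₂ := hle_trans b₁ a₂ b₂
  tfae_finish
end

section
/- Let L be a complete residuated lattice and Y a nonempty set. For L-sets A,B,M : Y → L let S(A,M) = ⨅_{y∈Y} (A(y) → M(y)) and ||A ⇒ B||_M = S(A,M) → S(B,M). Let T be a map assigning to each pair (A,B) of L-sets a degree T(A ⇒ B) ∈ L, let Mod(T) = {M : Y → L | T(A ⇒ B) ≤ ||A ⇒ B||_M for all A,B}, and ||A ⇒ B||_T = ⨅_{M ∈ Mod(T)} ||A ⇒ B||_M. If A,A',B,B' : Y → L satisfy ||A ⇒ A'||_T = ||A' ⇒ A||_T = 1 and ||B ⇒ B'||_T = ||B' ⇒ B||_T = 1, then ||A ⇒ B||_T = ||A' ⇒ B'||_T. (Hence the L-order on the quotient algebra 𝔐_T, defined on classes of T-equivalent L-sets by [A] ≼ [B] = ||A ⇒ B||_T,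 is well defined.) -/
open CompleteResiduatedLattice

local infixr:70 " ⊛ " => CompleteResiduatedLattice.otimes

variable {L : Type*} [CompleteResiduatedLattice L] {Y : Type*}

/-- The degree `S(A,M)` to which the L-set `A` is included in the L-set `M`. -/
def Ssub (A M : Y → L) : L := ⨅ y, rimp (A y) (M y)

/-- The degree `||A ⇒ B||_M` to which the fuzzy attribute implication
`A ⇒ B` is true in the L-set `M`. -/
def faiDeg (A B M : Y → L) : L := rimp (Ssub A M) (Ssub B M)

/-- The set `Mod(T)` of all models of an L-set `T` of fuzzy attribute
implications. -/
def faiMod (T : (Y → L) → (Y → L) → L) : Set (Y → L) :=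
  {M | ∀ A B, T A B ≤ faiDeg A B M}

/-- The degree `||A ⇒ B||_T` to which `A ⇒ B` is semantically entailed
by `T`. -/
def faiDegT (T : (Y → L) → (Y → L) → L) (A B : Y → L) : L :=
  ⨅ M ∈ faiMod T, faiDeg A B M

/-- Semantic entailment degrees are invariant under replacing `A`, `B` by
`T`-equivalent L-sets; hence the L-order `[A] ≼ [B] = ||A ⇒ B||_T` on the
quotient algebra `𝔐_T` is well defined. -/
theorem stmt5 {L : Type*} [CompleteResiduatedLattice L] {Y : Type*} [Nonempty Y]
    (T : (Y → L) → (Y → L) → L) (A A' B B' : Y → L)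
    (hA : faiDegT T A A' = ⊤) (hA' : faiDegT T A' A = ⊤)
    (hB : faiDegT T B B' = ⊤) (hB' : faiDegT T B' B = ⊤) :
    faiDegT T A B = faiDegT T A' B' := by
  have rimp_top : ∀ a b : L, rimp a b = ⊤ → a ≤ b := by
    intro a b h
    have := (adjoint (⊤ : L) a b).2 (h ▸ le_refl _)
    rwa [otimes_comm, otimes_top] at this
  have key : ∀ C D : Y → L, faiDegT T C D = ⊤ →
      ∀ M ∈ faiMod T, Ssub C M ≤ Ssub D M := by
    intro C D h M hM
    have h1 : faiDeg C D M = ⊤ := by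
      refine top_le_iff.1 ?_
      rw [← h]
      exact biInf_le _ hM
    exact rimp_top _ _ h1
  have eqdeg : ∀ M ∈ faiMod T, faiDeg A B M = faiDeg A' B' M := by
    intro M hM
    have hAM : Ssub A M = Ssub A' M :=
      le_antisymm (key A A' hA M hM) (key A' A hA' M hM)
    have hBM : Ssub B M = Ssub B' M :=
      le_antisymm (key B B' hB M hM) (key B' B hB' M hM)
    unfold faiDeg
    rw [hAM, hBM]
  unfold faiDegT
  exact iInf_congr fun M => iInf_congr fun hM => eqdeg M hM
end

section
/- Let L be a complete residuated lattice, 𝓛 a first-order language of function symbols, and M an algebra with L-order, i.e., an 𝓛-structure together with a binary L-relation ≼^M that is reflexive (a ≼^M a = 1), ⊗-transitive, compatible with the functions of M, and separated (for distinct a,b, not both a ≼^M b = 1 and b ≼^M a = 1). Let Q be a compatible L-preorder on M (≼^M pointwise below Q, Q ⊗-transitive, Q compatible with the functions of M). Consider the quotient M/Q of M by the equivalence a ∼ b iff Q(a,b) = Q(b,a) = 1, with functions f^{M/Q}([a₁],…,[aₙ]) = [f^M(a₁,…,aₙ)] and L-relation [a] ≼^{M/Q} [b] = Q(a,b). Then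 M/Q is again an algebra with L-order: ≼^{M/Q} is well defined, reflexive, ⊗-transitive, compatible with the functions f^{M/Q}, and separated (for distinct classes x,y, not both x ≼^{M/Q} y = 1 and y ≼^{M/Q} x = 1). -/
open FirstOrder FirstOrder.Language FirstOrder.Language.Structure

open CompleteResiduatedLattice

local infixr:70 " ⊛ " => CompleteResiduatedLattice.otimes

/-- The `⊗`-product `g 0 ⊗ g 1 ⊗ ⋯ ⊗ g (n-1)` of a finite tuple of degrees. -/
def bigMul {L : Type*} [CompleteResiduatedLattice L] : {n : ℕ} → (Fin n → L) → L
  | 0, _ => ⊤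
  | _ + 1, g => CompleteResiduatedLattice.otimes (g 0) (bigMul fun i => g i.succ)

/-- The factor algebra `M/Q` of an algebra with L-order modulo a compatible
L-preorder `Q` is again an algebra with L-order: on the quotient by the
equivalence `a ∼ b` iff `Q(a,b) = Q(b,a) = 1`, the relation
`[a] ≼ [b] = Q(a,b)` and the componentwise functions are well defined, and
the relation is reflexive, `⊗`-transitive, compatible with the quotient
functions, and separated. -/
theorem stmt8 {L : Type*} [CompleteResiduatedLattice L]
    (𝓛 : Language) (M : Type*) [𝓛.Structure M]
    (le : M → M → L)
    (hrefl : ∀ a : M, le a a = ⊤)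
    (htrans : ∀ a b c : M, le a b ⊛ le b c ≤ le a c)
    (hcomp : ∀ (n : ℕ) (f : 𝓛.Functions n) (a b : Fin n → M),
      bigMul (fun i => le (a i) (b i)) ≤ le (funMap f a) (funMap f b))
    (hsep : ∀ a b : M, a ≠ b → le a b ≠ ⊤ ∨ le b a ≠ ⊤)
    (Q : M → M → L)
    (hQle : ∀ a b : M, le a b ≤ Q a b)
    (hQtrans : ∀ a b c : M, Q a b ⊛ Q b c ≤ Q a c)
    (hQcomp : ∀ (n : ℕ) (f : 𝓛.Functions n) (a b : Fin n → M),
      bigMul (fun i => Q (a i) (b i)) ≤ Q (funMap f a) (funMap f b)) :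
    let r : M → M → Prop := fun a b => Q a b = ⊤ ∧ Q b a = ⊤
    ∃ (le' : Quot r → Quot r → L)
      (F : (n : ℕ) → 𝓛.Functions n → (Fin n → Quot r) → Quot r),
      (∀ a b : M, le' (Quot.mk r a) (Quot.mk r b) = Q a b) ∧
      (∀ (n : ℕ) (f : 𝓛.Functions n) (a : Fin n → M),
        F n f (fun i => Quot.mk r (a i)) = Quot.mk r (funMap f a)) ∧
      (∀ x : Quot r, le' x x = ⊤) ∧
      (∀ x y z : Quot r, le' x y ⊛ le' y z ≤ le' x z) ∧
      (∀ (n : ℕ) (f : 𝓛.Functions n) (x y : Fin n → Quot r),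
        bigMul (fun i => le' (x i) (y i)) ≤ le' (F n f x) (F n f y)) ∧
      (∀ x y : Quot r, x ≠ y → le' x y ≠ ⊤ ∨ le' y x ≠ ⊤) := by
  intro r
  have hQrefl : ∀ a : M, Q a a = ⊤ := fun a =>
    top_le_iff.mp ((hrefl a ▸ hQle a a))
  have top_otimes : ∀ x : L, (⊤ : L) ⊛ x = x := fun x =>
    (otimes_comm _ _).trans (otimes_top x)
  have bigMul_top : ∀ n : ℕ, bigMul (fun _ : Fin n => (⊤ : L)) = ⊤ := by
    intro n
    induction n with
    | zero => rfl
    | succ n ih => simp only [bigMul, ih, otimes_top]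
  have hQl : ∀ a a' b : M, r a a' → Q a b = Q a' b := by
    rintro a a' b ⟨h1, h2⟩
    apply le_antisymm
    · calc Q a b = Q a' a ⊛ Q a b := by rw [h2, top_otimes]
        _ ≤ Q a' b := hQtrans _ _ _
    · calc Q a' b = Q a a' ⊛ Q a' b := by rw [h1, top_otimes]
        _ ≤ Q a b := hQtrans _ _ _
  have hQr : ∀ (a b b' : M), r b b' → Q a b = Q a b' := by
    rintro a b b' ⟨h1, h2⟩
    apply le_antisymm
    · calc Q a b = Q a b ⊛ Q b b' := by rw [h1, otimes_top]
        _ ≤ Q a b' := hQtrans _ _ _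
    · calc Q a b' = Q a b' ⊛ Q b' b := by rw [h2, otimes_top]
        _ ≤ Q a b := hQtrans _ _ _
  refine ⟨Quot.lift₂ Q hQr hQl,
    fun n f x => Quot.mk r (funMap f (fun i => (x i).out)), ?_, ?_, ?_, ?_, ?_, ?_⟩
  · intro a b; rfl
  · intro n f a
    have key : ∀ i, r ((Quot.mk r (a i)).out) (a i) := by
      intro i
      have h : Quot.mk r ((Quot.mk r (a i)).out) = Quot.mk r (a i) :=
        Quot.out_eq _
      constructor
      · have : Quot.lift₂ Q hQr hQl (Quot.mk r ((Quot.mk r (a i)).out))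
            (Quot.mk r (a i)) = ⊤ := by rw [h]; exact hQrefl (a i)
        exact this
      · have : Quot.lift₂ Q hQr hQl (Quot.mk r (a i))
            (Quot.mk r ((Quot.mk r (a i)).out)) = ⊤ := by rw [h]; exact hQrefl (a i)
        exact this
    apply Quot.sound
    constructor
    · apply top_le_iff.mp
      calc (⊤ : L) = bigMul (fun _ : Fin n => (⊤ : L)) := (bigMul_top n).symm
        _ = bigMul (fun i => Q ((Quot.mk r (a i)).out) (a i)) := by
            congr 1; funext i; exact ((key i).1).symm
        _ ≤ _ := hQcomp n f _ _
    · apply top_le_iff.mp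
      calc (⊤ : L) = bigMul (fun _ : Fin n => (⊤ : L)) := (bigMul_top n).symm
        _ = bigMul (fun i => Q (a i) ((Quot.mk r (a i)).out)) := by
            congr 1; funext i; exact ((key i).2).symm
        _ ≤ _ := hQcomp n f _ _
  · intro x; induction x using Quot.ind with
    | _ a => exact hQrefl a
  · intro x y z
    induction x using Quot.ind with
    | _ a =>
      induction y using Quot.ind with
      | _ b =>
        induction z using Quot.ind with
        | _ c => exact hQtrans a b c
  · intro n f x y
    have hx : ∀ i, x i = Quot.mk r ((x i).out) := fun i => ((x i).out_eq).symm
    have hy : ∀ i, y i = Quot.mk r ((y i).out) := fun i => ((y i).out_eq).symm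
    calc bigMul (fun i => Quot.lift₂ Q hQr hQl (x i) (y i))
        = bigMul (fun i => Q ((x i).out) ((y i).out)) := by
          congr 1; funext i
          conv_lhs => rw [hx i, hy i]
          rfl
      _ ≤ Q (funMap f fun i => (x i).out) (funMap f fun i => (y i).out) :=
          hQcomp n f _ _
      _ = _ := rfl
  · intro x y hxy
    by_contra h
    push_neg at h
    obtain ⟨h1, h2⟩ := h
    apply hxy
    rw [← x.out_eq, ← y.out_eq]
    apply Quot.sound
    rw [← x.out_eq, ← y.out_eq] at h1 h2
    exact ⟨h1, h2⟩
end

section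
/- Let L be a complete residuated lattice, 𝓛 a first-order language of function symbols, and let M, N be algebras with L-order (𝓛-structures with reflexive, ⊗-transitive, function-compatible, separated binary L-relations ≼^M, ≼^N). Let h : M → N be a homomorphism (commuting with all function symbols and satisfying a ≼^M b ≤ h(a) ≼^N h(b)), and let Q_h(a,b) = h(a) ≼^N h(b). Consider the factor algebra M/Q_h (quotient by the equivalence a ∼ b iff Q_h(a,b) = Q_h(b,a) = 1, with functions induced componentwise and [a] ≼^{M/Q_h} [b] = Q_h(a,b)), and let h_{Q_h} : M → M/Q_h be the natural map a ↦ [a]. Then the map g : M/Q_h → N given by g([a]) = h(a) is well defined, commutes with the interpretations of all function symbols, satisfies [a] ≼^{M/Q_h} [b] = g([a]) ≼^N g([b]) (i.e., g is an embedding), and h = g ∘ h_{Q_h}. Moreover, if h is surjective then g is bijective. -/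
open FirstOrder FirstOrder.Language FirstOrder.Language.Structure

open CompleteResiduatedLattice

local infixr:70 " ⊛ " => CompleteResiduatedLattice.otimes

/-- Factorization of a homomorphism `h : M → N` through the factor algebra
`M/Q_h`: the map `g([a]) = h(a)` is a well-defined embedding with
`h = g ∘ h_{Q_h}`, and it is bijective whenever `h` is surjective. -/
theorem stmt12 {L : Type*} [CompleteResiduatedLattice L]
    (𝓛 : Language) (M N : Type*) [𝓛.Structure M] [𝓛.Structure N]
    (leM : M → M → L) (leN : N → N → L)
    (hreflM : ∀ a : M, leM a a = ⊤)
    (htransM : ∀ a b c : M, leM a b ⊛ leM b c ≤ leM a c)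
    (hcompM : ∀ (n : ℕ) (f : 𝓛.Functions n) (a b : Fin n → M),
      bigMul (fun i => leM (a i) (b i)) ≤ leM (funMap f a) (funMap f b))
    (hsepM : ∀ a b : M, a ≠ b → leM a b ≠ ⊤ ∨ leM b a ≠ ⊤)
    (hreflN : ∀ a : N, leN a a = ⊤)
    (htransN : ∀ a b c : N, leN a b ⊛ leN b c ≤ leN a c)
    (hcompN : ∀ (n : ℕ) (f : 𝓛.Functions n) (a b : Fin n → N),
      bigMul (fun i => leN (a i) (b i)) ≤ leN (funMap f a) (funMap f b))
    (hsepN : ∀ a b : N, a ≠ b → leN a b ≠ ⊤ ∨ leN b a ≠ ⊤)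
    (h : M → N)
    (hhom : ∀ (n : ℕ) (f : 𝓛.Functions n) (a : Fin n → M),
      h (funMap f a) = funMap f (fun i => h (a i)))
    (hmono : ∀ a b : M, leM a b ≤ leN (h a) (h b)) :
    let Qh : M → M → L := fun a b => leN (h a) (h b)
    let r : M → M → Prop := fun a b => Qh a b = ⊤ ∧ Qh b a = ⊤
    ∃ g : Quot r → N,
      (∀ a : M, g (Quot.mk r a) = h a) ∧
      (∀ (n : ℕ) (f : 𝓛.Functions n) (a : Fin n → M),
        g (Quot.mk r (funMap f a)) = funMap f (fun i => g (Quot.mk r (a i)))) ∧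
      (∀ a b : M, Qh a b = leN (g (Quot.mk r a)) (g (Quot.mk r b))) ∧
      (Function.Surjective h → Function.Bijective g) := by

  intro Qh r
  have hrel : ∀ a b : M, r a b → h a = h b := by
    intro a b hab
    by_contra hne
    rcases hsepN (h a) (h b) hne with hc | hc
    · exact hc hab.1
    · exact hc hab.2
  refine ⟨Quot.lift h hrel, fun a => rfl, ?_, fun a b => rfl, ?_⟩
  · intro n f a
    exact hhom n f a
  · intro hsurj
    constructor
    · intro x y hxy
      induction x using Quot.ind with | _ a =>
      induction y using Quot.ind with | _ b =>
      apply Quot.sound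
      simp only [Quot.lift] at hxy
      constructor
      · show leN (h a) (h b) = ⊤
        rw [hxy, hreflN]
      · show leN (h b) (h a) = ⊤
        rw [hxy, hreflN]
    · intro y
      obtain ⟨a, rfl⟩ := hsurj y
      exact ⟨Quot.mk r a, rfl⟩
end

section
/- Let L be a complete residuated lattice, 𝓛 a first-order language of function symbols, X a set of variables, and Σ an L-set of inequalities, i.e., a map assigning a degree Σ(t ≼ t') ∈ L to each pair of 𝓛-terms t,t' in variables X. Let M and N be algebras with L-order and let h : M → N be a surjective homomorphism (h commutes with the interpretations of all function symbols and a ≼^M b ≤ h(a) ≼^N h(b) for all a,b ∈ M). If M is a model of Σ, i.e., Σ(t ≼ t') ≤ ⨅_{v : X → M} (t.realize v ≼^M t'.realize v) for all terms t,t', then N is a model of Σ: Σ(t ≼ t') ≤ ⨅_{v : X → N} (t.realize v ≼^N t'.realize v) for all terms t,t'. -/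
open FirstOrder FirstOrder.Language FirstOrder.Language.Structure

open CompleteResiduatedLattice

local infixr:70 " ⊛ " => CompleteResiduatedLattice.otimes

/-- Surjective homomorphic images of models of an L-set of inequalities `Σ`
are models of `Σ`. -/
theorem stmt14 {L : Type*} [CompleteResiduatedLattice L]
    (𝓛 : Language) (X : Type*) (M N : Type*) [𝓛.Structure M] [𝓛.Structure N]
    (leM : M → M → L) (leN : N → N → L)
    (hreflM : ∀ a : M, leM a a = ⊤)
    (htransM : ∀ a b c : M, leM a b ⊛ leM b c ≤ leM a c)
    (hcompM : ∀ (n : ℕ) (f : 𝓛.Functions n) (a b : Fin n → M),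
      bigMul (fun i => leM (a i) (b i)) ≤ leM (funMap f a) (funMap f b))
    (hsepM : ∀ a b : M, a ≠ b → leM a b ≠ ⊤ ∨ leM b a ≠ ⊤)
    (hreflN : ∀ a : N, leN a a = ⊤)
    (htransN : ∀ a b c : N, leN a b ⊛ leN b c ≤ leN a c)
    (hcompN : ∀ (n : ℕ) (f : 𝓛.Functions n) (a b : Fin n → N),
      bigMul (fun i => leN (a i) (b i)) ≤ leN (funMap f a) (funMap f b))
    (hsepN : ∀ a b : N, a ≠ b → leN a b ≠ ⊤ ∨ leN b a ≠ ⊤)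
    (h : M → N) (hsurj : Function.Surjective h)
    (hhom : ∀ (n : ℕ) (f : 𝓛.Functions n) (a : Fin n → M),
      h (funMap f a) = funMap f (fun i => h (a i)))
    (hmono : ∀ a b : M, leM a b ≤ leN (h a) (h b))
    (Sg : 𝓛.Term X → 𝓛.Term X → L)
    (hmod : ∀ t t' : 𝓛.Term X,
      Sg t t' ≤ ⨅ v : X → M, leM (t.realize v) (t'.realize v)) :
    ∀ t t' : 𝓛.Term X,
      Sg t t' ≤ ⨅ v : X → N, leN (t.realize v) (t'.realize v) := by
  have hcomm : ∀ (u : X → M) (t : 𝓛.Term X),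
      h (t.realize u) = t.realize (fun x => h (u x)) := by
    intro u t
    induction t with
    | var x => simp [Term.realize]
    | func f ts ih => simp [Term.realize, hhom, ih]
  intro t t'
  refine le_iInf fun v => ?_
  obtain ⟨u, hu⟩ : ∃ u : X → M, ∀ x, h (u x) = v x := by
    choose u hu using fun x => hsurj (v x)
    exact ⟨u, hu⟩
  have hv : (fun x => h (u x)) = v := funext hu
  calc Sg t t' ≤ leM (t.realize u) (t'.realize u) :=
        (hmod t t').trans (iInf_le _ u)
    _ ≤ leN (h (t.realize u)) (h (t'.realize u)) := hmono _ _
    _ = leN (t.realize v) (t'.realize v) := by rw [hcomm, hcomm, hv]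
end

section
/- Let L be a complete residuated lattice, 𝓛 a first-order language of function symbols, X a set of variables, and Σ an L-set of inequalities, i.e., a map assigning a degree Σ(t ≼ t') ∈ L to each pair of 𝓛-terms t,t' in variables X. Let (M_i)_{i∈I} be a family of algebras with L-order, each a model of Σ (Σ(t ≼ t') ≤ ⨅_{v : X → M_i} (t.realize v ≼^{M_i} t'.realize v) for all terms t,t' and all i). Equip the product P = ∏_{i∈I} M_i with the componentwise 𝓛-structure (f^P(a₁,…,aₙ)(i) = f^{M_i}(a₁(i),…,aₙ(i))) and the L-relation a ≼^P b = ⨅_{i∈I} (a(i) ≼^{M_i} b(i)). Then P is a model of Σ: Σ(t ≼ t') ≤ ⨅_{v : X → P} (t.realize v ≼^P t'.realize v) for all terms t,t'. -/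
open FirstOrder FirstOrder.Language FirstOrder.Language.Structure

open CompleteResiduatedLattice

local infixr:70 " ⊛ " => CompleteResiduatedLattice.otimes

/-- The componentwise structure on a direct product of `𝓛`-structures. -/
instance piStructure {𝓛 : Language} {I : Type*} {M : I → Type*}
    [∀ i, 𝓛.Structure (M i)] : 𝓛.Structure (∀ i, M i) where
  funMap f a := fun i => funMap f (fun k => a k i)
  RelMap r a := ∀ i, RelMap r (fun k => a k i)

/-- Direct products of models of an L-set of inequalities `Σ` are models
of `Σ`, where the product carries the componentwise operations and the
L-order `a ≼ b = ⨅ i, a(i) ≼^{M_i} b(i)`. -/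
theorem stmt15 {L : Type*} [CompleteResiduatedLattice L]
    (𝓛 : Language) (X : Type*) (I : Type*) (M : I → Type*)
    [∀ i, 𝓛.Structure (M i)]
    (le : ∀ i, M i → M i → L)
    (hrefl : ∀ i, ∀ a : M i, le i a a = ⊤)
    (htrans : ∀ i, ∀ a b c : M i, le i a b ⊛ le i b c ≤ le i a c)
    (hcomp : ∀ i, ∀ (n : ℕ) (f : 𝓛.Functions n) (a b : Fin n → M i),
      bigMul (fun k => le i (a k) (b k)) ≤ le i (funMap f a) (funMap f b))
    (hsep : ∀ i, ∀ a b : M i, a ≠ b → le i a b ≠ ⊤ ∨ le i b a ≠ ⊤)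
    (Sg : 𝓛.Term X → 𝓛.Term X → L)
    (hmod : ∀ i, ∀ t t' : 𝓛.Term X,
      Sg t t' ≤ ⨅ v : X → M i, le i (t.realize v) (t'.realize v)) :
    ∀ t t' : 𝓛.Term X,
      Sg t t' ≤ ⨅ v : X → (∀ i, M i), ⨅ i, le i (t.realize v i) (t'.realize v i) := by
  have key : ∀ (t : 𝓛.Term X) (v : X → ∀ i, M i) (i : I),
      (t.realize v) i = t.realize (fun x => v x i) := by
    intro t
    induction t with
    | var x => intro v i; rfl
    | func f ts ih =>
      intro v i
      simp only [Term.realize]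
      show funMap f (fun k => (ts k).realize v i) = _
      congr 1
      funext k
      exact ih k v i
  intro t t'
  refine le_iInf fun v => le_iInf fun i => ?_
  have := (hmod i t t').trans (iInf_le _ (fun x => v x i))
  rwa [key t v i, key t' v i]
end

section
/- Let L be a complete residuated lattice, 𝓛 a first-order language of function symbols, and let M, N be algebras with L-order (𝓛-structures with reflexive, ⊗-transitive, function-compatible, separated binary L-relations ≼^M, ≼^N). Let h : M → N be a homomorphism (commuting with all function symbols and a ≼^M b ≤ h(a) ≼^N h(b)), and let Q be a compatible L-preorder on M such that Q(a,b) ≤ h(a) ≼^N h(b) for all a,b ∈ M. Consider the factor algebra M/Q (quotient by a ∼ b iff Q(a,b) = Q(b,a) = 1, functions induced componentwise, [a] ≼^{M/Q} [b] = Q(a,b)) and the natural map ν : M → M/Q, ν(a) = [a]. Then there exists a unique map g : M/Q → N with h = g ∘ ν, and this g is a homomorphism of algebras with L-order: it commutes with the interpretations of all function symbols and satisfies [a] ≼^{M/Q} [b] ≤ g([a]) ≼^N g([b]) for all a,b ∈ M. -/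
open FirstOrder FirstOrder.Language FirstOrder.Language.Structure

open CompleteResiduatedLattice

local infixr:70 " ⊛ " => CompleteResiduatedLattice.otimes

/-- If `Q` is a compatible L-preorder on `M` lying below the L-preorder
induced by a homomorphism `h : M → N`, then `h` factors uniquely through the
natural map `ν : M → M/Q`, and the factorizing map is a homomorphism of
algebras with L-order. -/
theorem stmt17 {L : Type*} [CompleteResiduatedLattice L]
    (𝓛 : Language) (M N : Type*) [𝓛.Structure M] [𝓛.Structure N]
    (leM : M → M → L) (leN : N → N → L)
    (hreflM : ∀ a : M, leM a a = ⊤)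
    (htransM : ∀ a b c : M, leM a b ⊛ leM b c ≤ leM a c)
    (hcompM : ∀ (n : ℕ) (f : 𝓛.Functions n) (a b : Fin n → M),
      bigMul (fun i => leM (a i) (b i)) ≤ leM (funMap f a) (funMap f b))
    (hsepM : ∀ a b : M, a ≠ b → leM a b ≠ ⊤ ∨ leM b a ≠ ⊤)
    (hreflN : ∀ a : N, leN a a = ⊤)
    (htransN : ∀ a b c : N, leN a b ⊛ leN b c ≤ leN a c)
    (hcompN : ∀ (n : ℕ) (f : 𝓛.Functions n) (a b : Fin n → N),
      bigMul (fun i => leN (a i) (b i)) ≤ leN (funMap f a) (funMap f b))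
    (hsepN : ∀ a b : N, a ≠ b → leN a b ≠ ⊤ ∨ leN b a ≠ ⊤)
    (h : M → N)
    (hhom : ∀ (n : ℕ) (f : 𝓛.Functions n) (a : Fin n → M),
      h (funMap f a) = funMap f (fun i => h (a i)))
    (hmono : ∀ a b : M, leM a b ≤ leN (h a) (h b))
    (Q : M → M → L)
    (hQle : ∀ a b : M, leM a b ≤ Q a b)
    (hQtrans : ∀ a b c : M, Q a b ⊛ Q b c ≤ Q a c)
    (hQcomp : ∀ (n : ℕ) (f : 𝓛.Functions n) (a b : Fin n → M),
      bigMul (fun i => Q (a i) (b i)) ≤ Q (funMap f a) (funMap f b))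
    (hQh : ∀ a b : M, Q a b ≤ leN (h a) (h b)) :
    let r : M → M → Prop := fun a b => Q a b = ⊤ ∧ Q b a = ⊤
    ∃ g : Quot r → N,
      (∀ a : M, g (Quot.mk r a) = h a) ∧
      (∀ g' : Quot r → N, (∀ a : M, g' (Quot.mk r a) = h a) → g' = g) ∧
      (∀ (n : ℕ) (f : 𝓛.Functions n) (a : Fin n → M),
        g (Quot.mk r (funMap f a)) = funMap f (fun i => g (Quot.mk r (a i)))) ∧
      (∀ a b : M, Q a b ≤ leN (g (Quot.mk r a)) (g (Quot.mk r b))) := by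
  intro r
  have hresp : ∀ a b : M, r a b → h a = h b := by
    intro a b ⟨h1, h2⟩
    by_contra hne
    rcases hsepN (h a) (h b) hne with hx | hx
    · exact hx (top_le_iff.mp (h1 ▸ hQh a b))
    · exact hx (top_le_iff.mp (h2 ▸ hQh b a))
  refine ⟨Quot.lift h hresp, fun a => rfl, ?_, ?_, ?_⟩
  · intro g' hg'
    funext x
    induction x using Quot.ind with
    | _ a => exact hg' a
  · intro n f a
    exact hhom n f a
  · intro a b
    exact hQh a b
end
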